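/- Let {f̂(n)}_{n≥0} ∈ GBV and {f̂(n) + f̂(−n)}_{n≥1} ∈ GBV, and suppose the series f(x) = Σ_{n=−∞}^{∞} f̂(n)e^{inx} converges at every x to a continuous function f ∈ C_{2π}. Then there exists C > 0 such that for every m ≥ 1 and every x ∈ [0, π]: |Σ_{k=m}^{∞} f̂(k) sin kx| ≤ C·sup_{k≥m} k·(|f̂(k)| + |f̂(−k)|) and |Σ_{k=m}^{∞} f̂(−k) sin kx| ≤ C·sup_{k≥m} k·(|f̂(k)| + |f̂(−k)|). -/

import Mathlib

open Filter Complex Real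
open scoped ENNReal NNReal

noncomputable section

/-- `K(θ) = {z ∈ ℂ : |arg z| ≤ θ}`. -/
def Kset (θ : ℝ) : Set ℂ := {z : ℂ | |Complex.arg z| ≤ θ}

/-- The class GBV: `c_n ∈ K(θ₁)` for some `θ₁ ∈ [0, π/2)` and all `n ≥ 1`, and
`Σ_{n=m}^{2m} |Δc_n| ≤ M · max_{m ≤ n < m+N₀} |c_n|` for all `m ≥ 1`. -/
def GBV (c : ℕ → ℂ) : Prop :=
  (∃ θ₁ : ℝ, 0 ≤ θ₁ ∧ θ₁ < Real.pi / 2 ∧ ∀ n, 1 ≤ n → c n ∈ Kset θ₁) ∧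
  (∃ N₀ : ℕ, 1 ≤ N₀ ∧ ∃ M : ℝ, 0 < M ∧ ∀ m, 1 ≤ m →
    (∑ n ∈ Finset.Icc m (2 * m), ‖c n - c (n + 1)‖) ≤
      M * ⨆ n ∈ Finset.Ico m (m + N₀), ‖c n‖)

lemma dirichlet_bound (x : ℝ) (hx0 : 0 < x) (hxπ : x ≤ Real.pi) (a b : ℕ) :
    |∑ j ∈ Finset.Icc a b, Real.sin (j * x)| ≤ 2 * Real.pi / x := by
  have hπ := Real.pi_pos
  set z : ℂ := Complex.exp (x * Complex.I) with hz
  have hre : z.re = Real.cos x := Complex.exp_ofReal_mul_I_re x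
  have him : z.im = Real.sin x := Complex.exp_ofReal_mul_I_im x
  have habs : ‖z‖ = 1 := Complex.norm_exp_ofReal_mul_I x
  have hsq : (‖z - 1‖)^2 = 2 - 2 * Real.cos x := by
    rw [Complex.sq_norm, Complex.normSq_apply]
    simp [Complex.sub_re, Complex.sub_im, hre, him]
    have := Real.sin_sq_add_cos_sq x
    nlinarith
  have hcos : Real.cos x ≤ 1 - 2 / Real.pi ^ 2 * x ^ 2 := by
    apply Real.cos_le_one_sub_mul_cos_sq
    rw [_root_.abs_of_nonneg hx0.le]; exact hxπ
  have hb : (0:ℝ) < 2 * x / Real.pi := by positivity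
  have h1 : (2 * x / Real.pi)^2 ≤ (‖z - 1‖)^2 := by
    have he : (2*x/Real.pi)^2 = 4/Real.pi^2*x^2 := by field_simp; ring
    rw [hsq, he]
    have h3 : 4/Real.pi^2*x^2 = 2*(2/Real.pi^2*x^2) := by ring
    linarith
  have hlow : 2 * x / Real.pi ≤ ‖z - 1‖ := by
    have := Real.sqrt_le_sqrt h1
    rwa [Real.sqrt_sq hb.le, Real.sqrt_sq (norm_nonneg _)] at this
  have hlow' : 0 < ‖z - 1‖ := lt_of_lt_of_le hb hlow
  have hz1 : z ≠ 1 := by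
    intro h; rw [h] at hlow'; simp at hlow'
  have hgeom : ∀ n : ℕ, ‖∑ i ∈ Finset.range n, z ^ i‖ ≤ 2 / ‖z - 1‖ := by
    intro n
    rw [geom_sum_eq hz1, norm_div]
    gcongr
    calc ‖z ^ n - 1‖ ≤ ‖z ^ n‖ + ‖(1:ℂ)‖ :=
          norm_sub_le _ _
    _ = 2 := by simp [norm_pow, habs]; norm_num
  -- express real sum as imaginary part
  have hterm : ∀ j : ℕ, Real.sin (j * x) = (z ^ j).im := by
    intro j
    rw [← Complex.exp_nat_mul]
    have : (j : ℂ) * (x * Complex.I) = (((j : ℝ) * x : ℝ) : ℂ) * Complex.I := by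
      push_cast; ring
    rw [this, Complex.exp_ofReal_mul_I_im]
  have hsum : ∑ j ∈ Finset.Icc a b, Real.sin (j * x) = (∑ j ∈ Finset.Icc a b, z ^ j).im := by
    rw [Complex.im_sum]
    exact Finset.sum_congr rfl fun j _ => hterm j
  rw [hsum]
  calc |(∑ j ∈ Finset.Icc a b, z ^ j).im| ≤ ‖∑ j ∈ Finset.Icc a b, z ^ j‖ :=
        Complex.abs_im_le_norm _
  _ ≤ 2 * Real.pi / x := by
      rcases le_or_gt a b with hab | hab
      · have hIcc : Finset.Icc a b = Finset.Ico a (b+1) := by rw [Finset.Ico_add_one_right_eq_Icc]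
        have hsub : ∑ j ∈ Finset.Ico a (b+1), z ^ j =
            (∑ j ∈ Finset.range (b+1), z ^ j) - ∑ j ∈ Finset.range a, z ^ j := by
          rw [Finset.sum_Ico_eq_sub _ (by omega)]
        rw [hIcc, hsub]
        calc ‖_‖ ≤ ‖∑ j ∈ Finset.range (b+1), z ^ j‖ +
              ‖∑ j ∈ Finset.range a, z ^ j‖ := norm_sub_le _ _
        _ ≤ 2 / ‖z - 1‖ + 2 / ‖z - 1‖ := by
            exact add_le_add (hgeom _) (hgeom _)
        _ ≤ 2 / (2 * x / Real.pi) + 2 / (2 * x / Real.pi) := by gcongr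
        _ = 2 * Real.pi / x := by field_simp; ring
      · rw [Finset.Icc_eq_empty (by omega)]
        simp; positivity

lemma abel_sum (c d : ℕ → ℂ) (a : ℕ) (ha : 1 ≤ a) :
    ∀ N, a ≤ N →
      ∑ k ∈ Finset.Icc a N, c k * d k =
        ∑ k ∈ Finset.Icc a (N - 1), (c k - c (k + 1)) * (∑ j ∈ Finset.Icc a k, d j) +
          c N * (∑ j ∈ Finset.Icc a N, d j) := by
  intro N hN
  induction N, hN using Nat.le_induction with
  | base =>
      rw [Finset.Icc_eq_empty (by omega : ¬ a ≤ a - 1)]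
      simp [Finset.Icc_self]
  | succ N hN ih =>
      have hsplit : ∑ k ∈ Finset.Icc a N, (c k - c (k + 1)) * (∑ j ∈ Finset.Icc a k, d j)
          = ∑ k ∈ Finset.Icc a (N - 1), (c k - c (k + 1)) * (∑ j ∈ Finset.Icc a k, d j)
            + (c N - c (N + 1)) * ∑ j ∈ Finset.Icc a N, d j := by
        conv_lhs => rw [show N = N - 1 + 1 by omega]
        rw [Finset.sum_Icc_succ_top (by omega : a ≤ N - 1 + 1)]
        rw [show N - 1 + 1 = N by omega]
      have hD : ∑ j ∈ Finset.Icc a (N + 1), d j = (∑ j ∈ Finset.Icc a N, d j) + d (N + 1) :=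
        Finset.sum_Icc_succ_top (by omega : a ≤ N + 1) d
      rw [Finset.sum_Icc_succ_top (by omega : a ≤ N + 1), ih,
        show N + 1 - 1 = N from rfl, hsplit, hD]
      ring

lemma dyadic_bound (g : ℕ → ℝ) (hg : ∀ k, 0 ≤ g k) (K : ℝ) (m : ℕ) (hm : 1 ≤ m)
    (hblock : ∀ n, m ≤ n → ∑ k ∈ Finset.Icc n (2 * n), g k ≤ K / n) :
    ∀ n, m ≤ n → ∀ N, ∑ k ∈ Finset.Icc n N, g k ≤ 2 * K / n := by
  have claim : ∀ J : ℕ, ∀ n, m ≤ n →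
      ∑ k ∈ Finset.Icc n (2 ^ J * n), g k ≤ ∑ j ∈ Finset.range (J + 1), K / (2 ^ j * n) := by
    intro J
    induction J with
    | zero =>
        intro n hn
        have hb : ∑ k ∈ Finset.Icc n n, g k ≤ K / n :=
          le_trans (Finset.sum_le_sum_of_subset_of_nonneg
                (Finset.Icc_subset_Icc le_rfl (by omega)) (fun k _ _ => hg k)) (hblock n hn)
        simpa using hb
    | succ J ih =>
        intro n hn
        have hn1 : 1 ≤ n := le_trans hm hn
        have hsplit : ∑ k ∈ Finset.Icc n (2 ^ (J + 1) * n), g k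
            = ∑ k ∈ Finset.Icc n (2 * n), g k + ∑ k ∈ Finset.Ioc (2 * n) (2 ^ (J + 1) * n), g k := by
          rw [show Finset.Icc n (2 ^ (J+1) * n) = Finset.Ioc (n - 1) (2 ^ (J+1) * n) from by
                rw [← Finset.Icc_add_one_left_eq_Ioc]; congr 1; omega,
              show Finset.Icc n (2 * n) = Finset.Ioc (n - 1) (2 * n) from by
                rw [← Finset.Icc_add_one_left_eq_Ioc]; congr 1; omega,
              ← Finset.sum_Ioc_consecutive _ (by omega : n - 1 ≤ 2 * n)
                (Nat.mul_le_mul (by calc 2 = 2^1 := rfl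
                  _ ≤ 2^(J+1) := Nat.pow_le_pow_right (by norm_num) (by omega)) le_rfl)]
        have h2 : ∑ k ∈ Finset.Ioc (2 * n) (2 ^ (J + 1) * n), g k
            ≤ ∑ k ∈ Finset.Icc (2 * n) (2 ^ J * (2 * n)), g k := by
          apply Finset.sum_le_sum_of_subset_of_nonneg _ (fun k _ _ => hg k)
          intro k hk
          simp only [Finset.mem_Ioc] at hk
          simp only [Finset.mem_Icc]
          refine ⟨by omega, ?_⟩
          calc k ≤ 2 ^ (J + 1) * n := hk.2
          _ = 2 ^ J * (2 * n) := by ring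
        have h3 := ih (2 * n) (by omega)
        push_cast at h3
        have hsum : ∑ j ∈ Finset.range (J + 1), K / (2 ^ j * (2 * n) : ℝ)
            = ∑ j ∈ Finset.Ico 1 (J + 2), K / (2 ^ j * n : ℝ) := by
          rw [Finset.range_eq_Ico, Finset.sum_Ico_eq_sum_range, Finset.sum_Ico_eq_sum_range]
          apply Finset.sum_congr (by norm_num)
          intro j hj
          congr 1
          push_cast
          ring
        calc ∑ k ∈ Finset.Icc n (2 ^ (J + 1) * n), g k
            ≤ K / n + ∑ j ∈ Finset.Ico 1 (J + 2), K / (2 ^ j * n : ℝ) := by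
              rw [hsplit, ← hsum]
              exact add_le_add (hblock n hn) (h2.trans h3)
        _ = ∑ j ∈ Finset.range (J + 2), K / (2 ^ j * n : ℝ) := by
              rw [Finset.range_eq_Ico, Finset.sum_eq_sum_Ico_succ_bot (by omega : 0 < J + 2)]
              norm_num
  intro n hn N
  have hn1 : (1:ℝ) ≤ n := by exact_mod_cast le_trans hm hn
  have hn0 : (0:ℝ) < n := by linarith
  calc ∑ k ∈ Finset.Icc n N, g k ≤ ∑ k ∈ Finset.Icc n (2 ^ N * n), g k := by
        apply Finset.sum_le_sum_of_subset_of_nonneg _ (fun k _ _ => hg k)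
        apply Finset.Icc_subset_Icc le_rfl
        calc N ≤ 2 ^ N := (Nat.lt_two_pow_self (n := N)).le
        _ ≤ 2 ^ N * n := Nat.le_mul_of_pos_right _ (by omega)
  _ ≤ ∑ j ∈ Finset.range (N + 1), K / (2 ^ j * n) := claim N n hn
  _ = ∑ j ∈ Finset.range (N + 1), (K / n) * (1 / 2) ^ j := by
        apply Finset.sum_congr rfl
        intro j _
        rw [div_pow, one_pow]
        rw [div_mul_eq_div_div, div_div]
        ring_nf
  _ = (K / n) * ∑ j ∈ Finset.range (N + 1), (1 / 2 : ℝ) ^ j := by rw [Finset.mul_sum]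
  _ ≤ (K / n) * 2 := by
        have hK : 0 ≤ K := by
          have h0 := hblock m le_rfl
          have h1 : (0:ℝ) ≤ ∑ k ∈ Finset.Icc m (2*m), g k := Finset.sum_nonneg fun k _ => hg k
          have hm' : (0:ℝ) < m := by exact_mod_cast hm
          by_contra h
          push_neg at h
          have : K / m < 0 := div_neg_of_neg_of_pos h hm'
          linarith [h1.trans h0]
        exact mul_le_mul_of_nonneg_left (sum_geometric_two_le _) (by positivity)
  _ = 2 * K / n := by ring

lemma key_bound (c : ℕ → ℂ) (s A : ℝ) (hs : 0 ≤ s) (hA : 0 ≤ A) (m : ℕ) (hm : 1 ≤ m)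
    (hc : ∀ k, m ≤ k → ‖c k‖ ≤ s / k)
    (hblock : ∀ n, m ≤ n → ∑ k ∈ Finset.Icc n (2 * n), ‖c k - c (k + 1)‖ ≤ A * s / n)
    (x : ℝ) (hx0 : 0 ≤ x) (hxπ : x ≤ Real.pi) (N : ℕ) :
    ‖∑ k ∈ Finset.Icc m N, c k * (Real.sin (k * x) : ℂ)‖ ≤
      (1 + 3 * Real.pi + 4 * Real.pi * A) * s := by
  have hπ := Real.pi_pos
  have hC0 : 0 ≤ (1 + 3 * Real.pi + 4 * Real.pi * A) := by positivity
  rcases eq_or_lt_of_le hx0 with hx | hx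
  · simp only [← hx, mul_zero, Real.sin_zero, Complex.ofReal_zero, mul_zero, Finset.sum_const_zero]
    simpa using mul_nonneg hC0 hs
  clear hx0
  -- choose n₀ and n₁
  set n₀ : ℕ := ⌈1 / x⌉₊ with hn₀def
  have hn₀pos : 1 ≤ n₀ := by
    rw [hn₀def]
    apply Nat.one_le_ceil_iff.mpr
    positivity
  have hn₀ge : 1 / x ≤ n₀ := Nat.le_ceil _
  have hn₀le : (n₀ : ℝ) ≤ 1 / x + 1 := (Nat.ceil_lt_add_one (by positivity)).le
  set n₁ : ℕ := max m n₀ with hn₁def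
  have hn₁m : m ≤ n₁ := le_max_left _ _
  have hn₁n₀ : n₀ ≤ n₁ := le_max_right _ _
  have hn₁pos : 1 ≤ n₁ := le_trans hm hn₁m
  have hxn₁ : 1 / (n₁ : ℝ) ≤ x := by
    rw [div_le_iff₀ (by exact_mod_cast hn₁pos : (0:ℝ) < n₁)]
    have h1 : 1 / x ≤ (n₁ : ℝ) := le_trans hn₀ge (by exact_mod_cast hn₁n₀)
    calc (1:ℝ) = x * (1/x) := by field_simp
    _ ≤ x * n₁ := by apply mul_le_mul_of_nonneg_left h1 hx.le
  -- bound for the "first part" sums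
  have part1 : ∀ b : ℕ, b ≤ n₁ →
      ‖∑ k ∈ Finset.Icc m b, c k * (Real.sin (k * x) : ℂ)‖ ≤ (1 + Real.pi) * s := by
    intro b hb
    calc ‖∑ k ∈ Finset.Icc m b, c k * (Real.sin (k * x) : ℂ)‖
        ≤ ∑ k ∈ Finset.Icc m b, ‖c k * (Real.sin (k * x) : ℂ)‖ :=
          norm_sum_le _ _
    _ ≤ ∑ k ∈ Finset.Icc m b, s * x := by
        apply Finset.sum_le_sum
        intro k hk
        rw [Finset.mem_Icc] at hk
        have hk1 : 1 ≤ k := le_trans hm hk.1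
        have hkR : (0:ℝ) < k := by exact_mod_cast hk1
        rw [norm_mul, Complex.norm_real, Real.norm_eq_abs]
        calc ‖c k‖ * |Real.sin ((k:ℝ) * x)|
            ≤ (s / k) * ((k:ℝ) * x) := by
              apply mul_le_mul (hc k hk.1) ?_ (abs_nonneg _) (by positivity)
              calc |Real.sin ((k:ℝ) * x)| ≤ |(k:ℝ) * x| := Real.abs_sin_le_abs
              _ = (k:ℝ) * x := abs_of_nonneg (by positivity)
        _ = s * x := by field_simp
    _ = (Finset.Icc m b).card * (s * x) := by rw [Finset.sum_const, nsmul_eq_mul]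
    _ ≤ (n₀ : ℝ) * (s * x) := by
        apply mul_le_mul_of_nonneg_right _ (by positivity)
        have hcard : (Finset.Icc m b).card ≤ n₀ := by
          rw [Nat.card_Icc]
          have := hn₁def ▸ hb
          omega
        exact_mod_cast hcard
    _ ≤ (1 / x + 1) * (s * x) := mul_le_mul_of_nonneg_right hn₀le (by positivity)
    _ = s + s * x := by field_simp
    _ ≤ (1 + Real.pi) * s := by nlinarith [mul_le_mul_of_nonneg_left hxπ hs]
  rcases le_or_gt N n₁ with hN | hN
  · refine le_trans (part1 N hN) ?_
    have h1 := mul_nonneg Real.pi_pos.le hs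
    have h2 := mul_nonneg (mul_nonneg Real.pi_pos.le hA) hs
    nlinarith
  -- split the sum
  have hsplit : ∑ k ∈ Finset.Icc m N, c k * (Real.sin (k * x) : ℂ)
      = ∑ k ∈ Finset.Icc m n₁, c k * (Real.sin (k * x) : ℂ)
        + ∑ k ∈ Finset.Icc (n₁ + 1) N, c k * (Real.sin (k * x) : ℂ) := by
    rw [show Finset.Icc m N = Finset.Ioc (m - 1) N from by rw [← Finset.Icc_add_one_left_eq_Ioc]; congr 1; omega,
      show Finset.Icc m n₁ = Finset.Ioc (m - 1) n₁ from by rw [← Finset.Icc_add_one_left_eq_Ioc]; congr 1; omega,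
      show Finset.Icc (n₁ + 1) N = Finset.Ioc n₁ N from by rw [← Finset.Icc_add_one_left_eq_Ioc],
      ← Finset.sum_Ioc_consecutive _ (by omega : m - 1 ≤ n₁) (by omega : n₁ ≤ N)]
  -- second part via Abel summation
  have habel := abel_sum c (fun j => (Real.sin (j * x) : ℂ)) (n₁ + 1) (by omega) N (by omega)
  have hD : ∀ k : ℕ, ‖∑ j ∈ Finset.Icc (n₁ + 1) k, (Real.sin (j * x) : ℂ)‖
      ≤ 2 * Real.pi / x := by
    intro k
    rw [← Complex.ofReal_sum, Complex.norm_real, Real.norm_eq_abs]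
    exact dirichlet_bound x hx hxπ _ _
  have hΔ : ∑ k ∈ Finset.Icc (n₁ + 1) (N - 1), ‖c k - c (k + 1)‖
      ≤ 2 * (A * s) / n₁ := by
    calc ∑ k ∈ Finset.Icc (n₁ + 1) (N - 1), ‖c k - c (k + 1)‖
        ≤ ∑ k ∈ Finset.Icc n₁ N, ‖c k - c (k + 1)‖ :=
          Finset.sum_le_sum_of_subset_of_nonneg
            (Finset.Icc_subset_Icc (by omega) (by omega)) (fun k _ _ => norm_nonneg _)
    _ ≤ 2 * (A * s) / n₁ := by
        have := dyadic_bound (fun k => ‖c k - c (k + 1)‖)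
          (fun k => norm_nonneg _) (A * s) m hm
          (fun n hn => by simpa [mul_div_assoc] using hblock n hn) n₁ hn₁m N
        simpa using this
  have hn₁R : (0:ℝ) < n₁ := by exact_mod_cast hn₁pos
  have part2 : ‖∑ k ∈ Finset.Icc (n₁ + 1) N, c k * (Real.sin (k * x) : ℂ)‖
      ≤ (2 * Real.pi + 4 * Real.pi * A) * s := by
    rw [habel]
    calc ‖_‖
        ≤ ‖∑ k ∈ Finset.Icc (n₁ + 1) (N - 1),
            (c k - c (k + 1)) * (∑ j ∈ Finset.Icc (n₁ + 1) k, (Real.sin (j * x) : ℂ))‖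
          + ‖c N * (∑ j ∈ Finset.Icc (n₁ + 1) N, (Real.sin (j * x) : ℂ))‖ :=
          norm_add_le _ _
    _ ≤ (∑ k ∈ Finset.Icc (n₁ + 1) (N - 1), ‖c k - c (k + 1)‖) * (2 * Real.pi / x)
          + (s / N) * (2 * Real.pi / x) := by
        apply add_le_add
        · calc ‖∑ k ∈ Finset.Icc (n₁ + 1) (N - 1),
                (c k - c (k + 1)) * (∑ j ∈ Finset.Icc (n₁ + 1) k, (Real.sin (j * x) : ℂ))‖
              ≤ ∑ k ∈ Finset.Icc (n₁ + 1) (N - 1), ‖(c k - c (k + 1)) * (∑ j ∈ Finset.Icc (n₁ + 1) k, (Real.sin (j * x) : ℂ))‖ :=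
                norm_sum_le _ _
          _ ≤ ∑ k ∈ Finset.Icc (n₁ + 1) (N - 1),
                ‖c k - c (k + 1)‖ * (2 * Real.pi / x) := by
              apply Finset.sum_le_sum
              intro k _
              rw [norm_mul]
              exact mul_le_mul_of_nonneg_left (hD k) (norm_nonneg _)
          _ = (∑ k ∈ Finset.Icc (n₁ + 1) (N - 1), ‖c k - c (k + 1)‖)
                * (2 * Real.pi / x) := by rw [← Finset.sum_mul]
        · rw [norm_mul]
          apply mul_le_mul (hc N (by omega)) (hD N) (norm_nonneg _)
          positivity
    _ ≤ (2 * (A * s) / n₁) * (2 * Real.pi / x) + (s / n₁) * (2 * Real.pi / x) := by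
        apply add_le_add
        · exact mul_le_mul_of_nonneg_right hΔ (by positivity)
        · apply mul_le_mul_of_nonneg_right _ (by positivity)
          apply div_le_div_of_nonneg_left hs ?_ ?_ |>.trans_eq rfl
          · exact hn₁R
          · exact_mod_cast (by omega : n₁ ≤ N)
    _ ≤ (2 * Real.pi + 4 * Real.pi * A) * s := by
        have h1 : (1:ℝ) / n₁ ≤ x := hxn₁
        have h2 : (2 * (A * s) / n₁) * (2 * Real.pi / x) = (4 * Real.pi * A * s) * ((1/n₁) / x) := by
          field_simp; ring
        have h3 : (s / n₁) * (2 * Real.pi / x) = (2 * Real.pi * s) * ((1/n₁) / x) := by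
          field_simp
        have h4 : ((1:ℝ)/n₁) / x ≤ 1 := by
          rw [div_le_one hx]
          exact h1
        rw [h2, h3]
        nlinarith [mul_le_mul_of_nonneg_left h4 (by positivity : (0:ℝ) ≤ 4 * Real.pi * A * s),
          mul_le_mul_of_nonneg_left h4 (by positivity : (0:ℝ) ≤ 2 * Real.pi * s)]
  calc ‖∑ k ∈ Finset.Icc m N, c k * (Real.sin (k * x) : ℂ)‖
      ≤ ‖∑ k ∈ Finset.Icc m n₁, c k * (Real.sin (k * x) : ℂ)‖
        + ‖∑ k ∈ Finset.Icc (n₁ + 1) N, c k * (Real.sin (k * x) : ℂ)‖ := by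
        rw [hsplit]; exact norm_add_le _ _
  _ ≤ (1 + Real.pi) * s + (2 * Real.pi + 4 * Real.pi * A) * s := add_le_add (part1 n₁ le_rfl) part2
  _ = (1 + 3 * Real.pi + 4 * Real.pi * A) * s := by ring

lemma window_sup_le (c : ℕ → ℂ) (a b : ℕ) (B : ℝ) (hB : 0 ≤ B)
    (h : ∀ j ∈ Finset.Ico a b, ‖c j‖ ≤ B) :
    (⨆ n ∈ Finset.Ico a b, ‖c n‖) ≤ B := by
  apply Real.iSup_le _ hB
  intro j
  by_cases hj : j ∈ Finset.Ico a b
  · rw [ciSup_pos hj]; exact h j hj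
  · have : IsEmpty (j ∈ Finset.Ico a b) := ⟨hj⟩
    rw [Real.iSup_of_isEmpty]; exact hB

/-- Lemma 7: under the GBV hypotheses with `f ∈ C_{2π}`, uniformly in `m ≥ 1` and
`x ∈ [0, π]`, `|Σ_{k=m}^{∞} f̂(±k) sin kx| = O(sup_{k≥m} k(|f̂(k)| + |f̂(−k)|))`
(the tail sums being interpreted as limits of partial sums, and the supremum being
taken in `ℝ≥0∞`). -/
theorem stmt_10 (fhat : ℤ → ℂ) (f : ℝ → ℂ)
    (h1 : GBV (fun n : ℕ => fhat (n : ℤ)))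
    (h2 : GBV (fun n : ℕ => fhat (n : ℤ) + fhat (-(n : ℤ))))
    (hconv : ∀ x : ℝ, Filter.Tendsto
      (fun N : ℕ => ∑ k ∈ Finset.Icc (-(N : ℤ)) (N : ℤ),
        fhat k * Complex.exp ((k : ℂ) * (x : ℂ) * Complex.I))
      Filter.atTop (nhds (f x)))
    (hcont : Continuous f) :
    ∃ C : ℝ≥0, 0 < C ∧ ∀ m : ℕ, 1 ≤ m → ∀ x ∈ Set.Icc (0 : ℝ) Real.pi,
      (∀ L : ℂ, Filter.Tendsto
          (fun N : ℕ => ∑ k ∈ Finset.Icc m N, fhat (k : ℤ) * (Real.sin (k * x) : ℂ))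
          Filter.atTop (nhds L) →
        (‖L‖₊ : ℝ≥0∞) ≤ (C : ℝ≥0∞) *
          ⨆ k : ℕ, ⨆ _ : m ≤ k, (k : ℝ≥0∞) *
            ((‖fhat (k : ℤ)‖₊ : ℝ≥0∞) + (‖fhat (-(k : ℤ))‖₊ : ℝ≥0∞))) ∧
      (∀ L : ℂ, Filter.Tendsto
          (fun N : ℕ => ∑ k ∈ Finset.Icc m N, fhat (-(k : ℤ)) * (Real.sin (k * x) : ℂ))
          Filter.atTop (nhds L) →
        (‖L‖₊ : ℝ≥0∞) ≤ (C : ℝ≥0∞) *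
          ⨆ k : ℕ, ⨆ _ : m ≤ k, (k : ℝ≥0∞) *
            ((‖fhat (k : ℤ)‖₊ : ℝ≥0∞) + (‖fhat (-(k : ℤ))‖₊ : ℝ≥0∞))) := by
  obtain ⟨-, N₁, hN₁, M₁, hM₁, hG1⟩ := h1
  obtain ⟨-, N₂, hN₂, M₂, hM₂, hG2⟩ := h2
  set A : ℝ := 2 * (M₁ + M₂) with hA_def
  have hA : 0 ≤ A := by positivity
  set C₀ : ℝ := 1 + 3 * Real.pi + 4 * Real.pi * A with hC₀def
  have hC₀ : 0 < C₀ := by positivity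
  refine ⟨Real.toNNReal C₀, Real.toNNReal_pos.mpr hC₀, ?_⟩
  intro m hm x hx
  obtain ⟨hx0, hxπ⟩ := hx
  set S : ℝ≥0∞ := ⨆ k : ℕ, ⨆ _ : m ≤ k, (k : ℝ≥0∞) *
    ((‖fhat (k : ℤ)‖₊ : ℝ≥0∞) + (‖fhat (-(k : ℤ))‖₊ : ℝ≥0∞)) with hSdef
  by_cases hS : S = ⊤
  · have hCne : ((Real.toNNReal C₀ : ℝ≥0∞)) ≠ 0 :=
      ENNReal.coe_ne_zero.mpr (Real.toNNReal_pos.mpr hC₀).ne'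
    constructor <;> (intro L _; rw [hS, ENNReal.mul_top hCne]; exact le_top)
  -- finite sup case
  · set s : ℝ := S.toReal with hsdef
    have hs : 0 ≤ s := ENNReal.toReal_nonneg
    have hk_le : ∀ k, m ≤ k →
        (k : ℝ) * (‖fhat (k : ℤ)‖ + ‖fhat (-(k : ℤ))‖) ≤ s := by
      intro k hk
      have hterm : ((k : ℝ≥0∞) * ((‖fhat (k : ℤ)‖₊ : ℝ≥0∞) + (‖fhat (-(k : ℤ))‖₊ : ℝ≥0∞))) ≤ S := by
        rw [hSdef]
        exact le_iSup_of_le k (le_iSup_of_le hk le_rfl)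
      have hfin : ((k : ℝ≥0∞) * ((‖fhat (k : ℤ)‖₊ : ℝ≥0∞) + (‖fhat (-(k : ℤ))‖₊ : ℝ≥0∞))) ≠ ⊤ :=
        ENNReal.mul_ne_top (by simp) (by simp)
      have := ENNReal.toReal_mono hS hterm
      rw [ENNReal.toReal_mul, ENNReal.toReal_add (by simp) (by simp)] at this
      simpa using this
    have hkpos : ∀ k : ℕ, m ≤ k → (0:ℝ) < k := by
      intro k hk; exact_mod_cast lt_of_lt_of_le (by omega : 0 < m) hk
    have hc1 : ∀ k, m ≤ k → ‖fhat (k : ℤ)‖ ≤ s / k := by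
      intro k hk
      rw [le_div_iff₀ (hkpos k hk)]
      calc ‖fhat (k : ℤ)‖ * k
          ≤ (‖fhat (k : ℤ)‖ + ‖fhat (-(k : ℤ))‖) * k := by
            apply mul_le_mul_of_nonneg_right _ (hkpos k hk).le
            simpa using norm_nonneg (fhat (-(k:ℤ)))
      _ = (k : ℝ) * (‖fhat (k : ℤ)‖ + ‖fhat (-(k : ℤ))‖) := by ring
      _ ≤ s := hk_le k hk
    have hc2 : ∀ k, m ≤ k → ‖fhat (-(k : ℤ))‖ ≤ s / k := by
      intro k hk
      rw [le_div_iff₀ (hkpos k hk)]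
      calc ‖fhat (-(k : ℤ))‖ * k
          ≤ (‖fhat (k : ℤ)‖ + ‖fhat (-(k : ℤ))‖) * k := by
            apply mul_le_mul_of_nonneg_right _ (hkpos k hk).le
            simpa using norm_nonneg (fhat (k:ℤ))
      _ = (k : ℝ) * (‖fhat (k : ℤ)‖ + ‖fhat (-(k : ℤ))‖) := by ring
      _ ≤ s := hk_le k hk
    -- block estimates
    have hsn : ∀ n : ℕ, m ≤ n → ∀ j, n ≤ j → s / (j:ℝ) ≤ s / n := by
      intro n hn j hj
      apply div_le_div_of_nonneg_left hs ?_ ?_ |>.trans_eq rfl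
      · exact hkpos n hn
      · exact_mod_cast hj
    have hblock1 : ∀ n, m ≤ n →
        ∑ k ∈ Finset.Icc n (2 * n), ‖fhat (k:ℤ) - fhat ((k+1 : ℕ):ℤ)‖ ≤ M₁ * s / n := by
      intro n hn
      have hwin : (⨆ j ∈ Finset.Ico n (n + N₁), ‖fhat (j:ℤ)‖) ≤ s / n := by
        apply window_sup_le _ _ _ _ (by positivity)
        intro j hj
        rw [Finset.mem_Ico] at hj
        exact le_trans (hc1 j (le_trans hn hj.1)) (hsn n hn j hj.1)
      calc ∑ k ∈ Finset.Icc n (2 * n), ‖fhat (k:ℤ) - fhat ((k+1:ℕ):ℤ)‖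
          ≤ M₁ * ⨆ j ∈ Finset.Ico n (n + N₁), ‖fhat (j:ℤ)‖ := by
            simpa using hG1 n (le_trans hm hn)
      _ ≤ M₁ * (s / n) := mul_le_mul_of_nonneg_left hwin hM₁.le
      _ = M₁ * s / n := by ring
    have hblock2 : ∀ n, m ≤ n →
        ∑ k ∈ Finset.Icc n (2 * n), ‖fhat (-(k:ℤ)) - fhat (-((k+1 : ℕ):ℤ))‖ ≤ A * s / n := by
      intro n hn
      have hwin2 : (⨆ j ∈ Finset.Ico n (n + N₂),
          ‖fhat (j:ℤ) + fhat (-(j:ℤ))‖) ≤ 2 * (s / n) := by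
        apply window_sup_le _ _ _ _ (by positivity)
        intro j hj
        rw [Finset.mem_Ico] at hj
        have hj' := le_trans hn hj.1
        calc ‖fhat (j:ℤ) + fhat (-(j:ℤ))‖
            ≤ ‖fhat (j:ℤ)‖ + ‖fhat (-(j:ℤ))‖ := norm_add_le _ _
        _ ≤ s / j + s / j := add_le_add (hc1 j hj') (hc2 j hj')
        _ ≤ s / n + s / n := add_le_add (hsn n hn j hj.1) (hsn n hn j hj.1)
        _ = 2 * (s / n) := by ring
      have hpt : ∀ k : ℕ, ‖fhat (-(k:ℤ)) - fhat (-((k+1:ℕ):ℤ))‖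
          ≤ ‖(fhat (k:ℤ) + fhat (-(k:ℤ))) - (fhat ((k+1:ℕ):ℤ) + fhat (-((k+1:ℕ):ℤ)))‖
            + ‖fhat (k:ℤ) - fhat ((k+1:ℕ):ℤ)‖ := by
        intro k
        have : fhat (-(k:ℤ)) - fhat (-((k+1:ℕ):ℤ))
            = ((fhat (k:ℤ) + fhat (-(k:ℤ))) - (fhat ((k+1:ℕ):ℤ) + fhat (-((k+1:ℕ):ℤ))))
              - (fhat (k:ℤ) - fhat ((k+1:ℕ):ℤ)) := by ring
        rw [this]
        exact norm_sub_le _ _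
      calc ∑ k ∈ Finset.Icc n (2 * n), ‖fhat (-(k:ℤ)) - fhat (-((k+1:ℕ):ℤ))‖
          ≤ ∑ k ∈ Finset.Icc n (2 * n),
            (‖(fhat (k:ℤ) + fhat (-(k:ℤ))) - (fhat ((k+1:ℕ):ℤ) + fhat (-((k+1:ℕ):ℤ)))‖
              + ‖fhat (k:ℤ) - fhat ((k+1:ℕ):ℤ)‖) :=
            Finset.sum_le_sum (fun k _ => hpt k)
      _ = ∑ k ∈ Finset.Icc n (2 * n),
            ‖(fhat (k:ℤ) + fhat (-(k:ℤ))) - (fhat ((k+1:ℕ):ℤ) + fhat (-((k+1:ℕ):ℤ)))‖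
          + ∑ k ∈ Finset.Icc n (2 * n), ‖fhat (k:ℤ) - fhat ((k+1:ℕ):ℤ)‖ :=
            Finset.sum_add_distrib
      _ ≤ M₂ * (2 * (s / n)) + M₁ * s / n := by
          apply add_le_add _ (hblock1 n hn)
          calc ∑ k ∈ Finset.Icc n (2 * n),
              ‖(fhat (k:ℤ) + fhat (-(k:ℤ))) - (fhat ((k+1:ℕ):ℤ) + fhat (-((k+1:ℕ):ℤ)))‖
              ≤ M₂ * ⨆ j ∈ Finset.Ico n (n + N₂), ‖fhat (j:ℤ) + fhat (-(j:ℤ))‖ := by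
                simpa using hG2 n (le_trans hm hn)
          _ ≤ M₂ * (2 * (s / n)) := mul_le_mul_of_nonneg_left hwin2 hM₂.le
      _ ≤ A * s / n := by
          have hn0 : (0:ℝ) < n := hkpos n hn
          have hq : (0:ℝ) ≤ s / n := by positivity
          rw [hA_def, mul_div_assoc, mul_div_assoc]
          nlinarith [mul_nonneg hM₁.le hq, mul_nonneg hM₂.le hq]
    have hblock1' : ∀ n, m ≤ n →
        ∑ k ∈ Finset.Icc n (2 * n), ‖fhat (k:ℤ) - fhat ((k+1 : ℕ):ℤ)‖ ≤ A * s / n := by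
      intro n hn
      refine le_trans (hblock1 n hn) ?_
      have hn0 : (0:ℝ) < n := hkpos n hn
      have hq : (0:ℝ) ≤ s / n := by positivity
      rw [hA_def, mul_div_assoc, mul_div_assoc]
      nlinarith [mul_nonneg hM₁.le hq, mul_nonneg hM₂.le hq]
    -- conclude for an arbitrary coefficient sequence
    have conclude : ∀ c : ℕ → ℂ, (∀ k, m ≤ k → ‖c k‖ ≤ s / k) →
        (∀ n, m ≤ n → ∑ k ∈ Finset.Icc n (2 * n), ‖c k - c (k + 1)‖ ≤ A * s / n) →
        ∀ L : ℂ, Filter.Tendsto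
          (fun N : ℕ => ∑ k ∈ Finset.Icc m N, c k * (Real.sin (k * x) : ℂ))
          Filter.atTop (nhds L) →
        (‖L‖₊ : ℝ≥0∞) ≤ ((Real.toNNReal C₀ : ℝ≥0∞)) * S := by
      intro c hc hblock L hL
      have hbound : ∀ N : ℕ, ‖∑ k ∈ Finset.Icc m N, c k * (Real.sin (k * x) : ℂ)‖ ≤ C₀ * s := by
        intro N
        rw [hC₀def]
        exact key_bound c s A hs hA m hm hc hblock x hx0 hxπ N
      have hLnorm : ‖L‖ ≤ C₀ * s :=
        le_of_tendsto' hL.norm hbound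
      calc (‖L‖₊ : ℝ≥0∞) = ENNReal.ofReal ‖L‖ := (ofReal_norm L).symm
      _ ≤ ENNReal.ofReal (C₀ * s) := ENNReal.ofReal_le_ofReal hLnorm
      _ = ENNReal.ofReal C₀ * ENNReal.ofReal s := ENNReal.ofReal_mul hC₀.le
      _ = ((Real.toNNReal C₀ : ℝ≥0∞)) * S := by
        rw [hsdef, ENNReal.ofReal_toReal hS]
        rfl
    exact ⟨conclude (fun k => fhat (k:ℤ)) hc1 hblock1',
      conclude (fun k => fhat (-(k:ℤ))) hc2 hblock2⟩
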